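/- Let p be a prime and G a metabelian p-group of order p^n of maximal class with n > 3. If G possesses an abelian subgroup A with |G : A| = p, then CD(G) = {A}. -/

import Mathlib

/-- The Chermak-Delgado measure of a subgroup `H` of `G`: `|H| · |C_G(H)|`. -/
noncomputable def cdMeasure (G : Type*) [Group G] (H : Subgroup G) : ℕ :=
  Nat.card H * Nat.card (Subgroup.centralizer (H : Set G))

/-- The Chermak-Delgado lattice of `G`: the set of subgroups whose
Chermak-Delgado measure is maximal. -/
def CD (G : Type*) [Group G] : Set (Subgroup G) :=
  {H : Subgroup G | ∀ K : Subgroup G, cdMeasure G K ≤ cdMeasure G H}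

set_option maxHeartbeats 1000000 in
theorem stmt_18 (p n : ℕ) (hp : p.Prime) (G : Type*) [Group G] [Finite G]
    (hcard : Nat.card G = p ^ n) (hn : 3 < n)
    (hmeta : IsMulCommutative (commutator G))
    (hmax₁ : (⊤ : Subgroup G).lowerCentralSeries (n - 1) = ⊥)
    (hmax₂ : ∀ k < n - 1, (⊤ : Subgroup G).lowerCentralSeries k ≠ ⊥)
    (A : Subgroup G) (hab : IsMulCommutative A) (hiA : A.index = p) :
    CD G = {A} := by
  haveI : Fact p.Prime := ⟨hp⟩
  have hp1 : 1 < p := hp.one_lt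
  -- every subgroup has p-power order
  have hdvd : ∀ K : Subgroup G, ∃ k ≤ n, Nat.card K = p ^ k := by
    intro K
    have h1 := K.card_subgroup_dvd_card
    rw [hcard] at h1
    obtain ⟨k, hk, he⟩ := (Nat.dvd_prime_pow hp).mp h1
    exact ⟨k, hk, he⟩
  -- proper subgroups have order at most p^(n-1)
  have hlt : ∀ K : Subgroup G, K ≠ ⊤ → Nat.card K ≤ p ^ (n - 1) := by
    intro K hK
    obtain ⟨k, hk, he⟩ := hdvd K
    have hkn : k ≠ n := by
      rintro rfl
      exact hK (Subgroup.eq_top_of_card_eq _ (by rw [he, hcard]))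
    rw [he]
    exact Nat.pow_le_pow_right (by omega) (by omega)
  -- the center has order at most p^(n-3)
  have hZ : Nat.card (Subgroup.center G) ≤ p ^ (n - 3) := by
    by_contra hc
    push_neg at hc
    obtain ⟨m, hm, he⟩ := hdvd (Subgroup.center G)
    have hm2 : n - 2 ≤ m := by
      by_contra h
      push_neg at h
      have : Nat.card (Subgroup.center G) ≤ p ^ (n - 3) := by
        rw [he]; exact Nat.pow_le_pow_right (by omega) (by omega)
      omega
    have hidx : (Subgroup.center G).index = p ^ (n - m) := by
      have h1 := (Subgroup.center G).card_mul_index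
      rw [he, hcard] at h1
      have h2 : p ^ m * p ^ (n - m) = p ^ n := by rw [← pow_add]; congr 1; omega
      have hpm : 0 < p ^ m := Nat.pow_pos (by omega : 0 < p)
      exact Nat.eq_of_mul_eq_mul_left hpm (by rw [h1, h2])
    have hqcard : Nat.card (G ⧸ Subgroup.center G) = p ^ (n - m) := hidx
    have hcomm : ∀ a b : G ⧸ Subgroup.center G, a * b = b * a := by
      have hnm : n - m ≤ 2 := by omega
      interval_cases h : (n - m)
      · rw [pow_zero] at hqcard
        haveI : Subsingleton (G ⧸ Subgroup.center G) :=
          Nat.card_eq_one_iff_unique.mp hqcard |>.1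
        intro a b; exact Subsingleton.elim _ _
      · rw [pow_one] at hqcard
        haveI : IsCyclic (G ⧸ Subgroup.center G) := isCyclic_of_prime_card hqcard
        intro a b
        obtain ⟨g, hg⟩ := IsCyclic.exists_generator (α := G ⧸ Subgroup.center G)
        obtain ⟨i, rfl⟩ := hg a
        obtain ⟨j, rfl⟩ := hg b
        rw [← zpow_add, ← zpow_add, add_comm]
      · exact IsPGroup.commutative_of_card_eq_prime_sq hqcard
    have hcle : commutator G ≤ Subgroup.center G := by
      rw [commutator_def, Subgroup.commutator_le]
      intro g _ h _
      rw [← QuotientGroup.eq_one_iff]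
      open scoped commutatorElement in
      have hmk : ((⁅g, h⁆ : G) : G ⧸ Subgroup.center G) =
          ⁅(g : G ⧸ Subgroup.center G), (h : G ⧸ Subgroup.center G)⁆ := rfl
      rw [hmk, commutatorElement_eq_one_iff_commute]
      exact hcomm _ _
    have hlcs : (⊤ : Subgroup G).lowerCentralSeries 2 = ⊥ := by
      have h2 : (⊤ : Subgroup G).lowerCentralSeries 2 = ⁅commutator G, (⊤ : Subgroup G)⁆ := rfl
      rw [h2, Subgroup.commutator_eq_bot_iff_le_centralizer]
      refine hcle.trans ?_
      rw [Subgroup.coe_top, Subgroup.centralizer_univ]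
    exact hmax₂ 2 (by omega) hlcs
  -- maximality of index-p subgroups
  have hmaxl : ∀ K : Subgroup G, K.index = p → ∀ L : Subgroup G, K ≤ L → L = K ∨ L = ⊤ := by
    intro K hK L hKL
    have h1 : K.relIndex L * L.index = K.index := Subgroup.relIndex_mul_index hKL
    rw [hK] at h1
    have hdL : L.index ∣ p := Dvd.intro_left _ h1
    rcases (Nat.Prime.eq_one_or_self_of_dvd hp _ hdL) with h | h
    · right; exact Subgroup.index_eq_one.mp h
    · left
      rw [h] at h1
      have hr : K.relIndex L = 1 :=
        Nat.eq_of_mul_eq_mul_right (by omega : 0 < p) (h1.trans (one_mul p).symm)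
      exact le_antisymm (Subgroup.relIndex_eq_one.mp hr) hKL
  -- subgroups of index p have order p^(n-1)
  have hcard_of_index : ∀ K : Subgroup G, K.index = p → Nat.card K = p ^ (n - 1) := by
    intro K hK
    have h1 := K.card_mul_index
    rw [hK, hcard] at h1
    have h2 : p ^ (n - 1) * p = p ^ n := by rw [← pow_succ]; congr 1; omega
    exact Nat.eq_of_mul_eq_mul_right (by omega) (h1.trans h2.symm)
  -- subgroups of order p^(n-1) have index p
  have hindex_of_card : ∀ K : Subgroup G, Nat.card K = p ^ (n - 1) → K.index = p := by
    intro K hK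
    have h1 := K.card_mul_index
    rw [hK, hcard] at h1
    have h2 : p ^ (n - 1) * p = p ^ n := by rw [← pow_succ]; congr 1; omega
    exact Nat.eq_of_mul_eq_mul_left (Nat.pow_pos (by omega : 0 < p)) (h1.trans h2.symm)
  have hcA : Nat.card A = p ^ (n - 1) := hcard_of_index A hiA
  -- membership in the center via a centralizer of a singleton
  have hcen : ∀ (H K : Subgroup G) (x : G), H ⊔ K = ⊤ →
      H ≤ Subgroup.centralizer {x} → K ≤ Subgroup.centralizer {x} →
      x ∈ Subgroup.center G := by
    intro H K x hsup hH hK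
    rw [Subgroup.mem_center_iff]
    intro g
    have hg : g ∈ Subgroup.centralizer ({x} : Set G) := by
      have htop : (⊤ : Subgroup G) ≤ Subgroup.centralizer {x} := by
        rw [← hsup]; exact sup_le hH hK
      exact htop (Subgroup.mem_top g)
    exact (Subgroup.mem_centralizer_iff.mp hg x rfl).symm
  -- two index-p subgroups whose meet is central: contradiction
  have hmeet : ∀ H K : Subgroup G, H.index = p → K.index = p →
      (H ⊓ K) ≤ Subgroup.center G → False := by
    intro H K hiH hiK hsub
    have hidx : (H ⊓ K).index ≤ p * p := by
      calc (H ⊓ K).index ≤ H.index * K.index := Subgroup.index_inf_le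
        _ = p * p := by rw [hiH, hiK]
    have h1 := (H ⊓ K).card_mul_index
    rw [hcard] at h1
    have hge : p ^ (n - 2) ≤ Nat.card ↥(H ⊓ K) := by
      have h2 : p ^ n ≤ Nat.card ↥(H ⊓ K) * (p * p) := by
        calc p ^ n = Nat.card ↥(H ⊓ K) * (H ⊓ K).index := h1.symm
          _ ≤ Nat.card ↥(H ⊓ K) * (p * p) := Nat.mul_le_mul_left _ hidx
      have h3 : p ^ (n - 2) * (p * p) = p ^ n := by
        rw [← pow_two, ← pow_add]; congr 1; omega
      exact Nat.le_of_mul_le_mul_right (by rw [h3]; exact h2) (by positivity)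
    have hle := Subgroup.card_le_of_le hsub
    have : p ^ (n - 2) ≤ p ^ (n - 3) := le_trans hge (le_trans hle hZ)
    have hlt' : p ^ (n - 3) < p ^ (n - 2) := Nat.pow_lt_pow_right hp1 (by omega)
    omega
  -- centralizer of A is A
  have hCA : Subgroup.centralizer (A : Set G) = A := by
    have hle : A ≤ Subgroup.centralizer (A : Set G) := Subgroup.le_centralizer A
    rcases hmaxl A hiA _ hle with h | h
    · exact h
    · exfalso
      have hAc : A ≤ Subgroup.center G := by
        intro x hx
        rw [Subgroup.mem_center_iff]
        intro g
        have hg : g ∈ Subgroup.centralizer (A : Set G) := h ▸ Subgroup.mem_top g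
        exact (Subgroup.mem_centralizer_iff.mp hg x hx).symm
      have h1 := Subgroup.card_le_of_le hAc
      rw [hcA] at h1
      have h2 : p ^ (n - 3) < p ^ (n - 1) := Nat.pow_lt_pow_right hp1 (by omega)
      omega
  have hmA : cdMeasure G A = p ^ (n - 1) * p ^ (n - 1) := by
    rw [cdMeasure, hCA, hcA]
  -- uniqueness of the abelian subgroup of index p
  have huniq : ∀ H : Subgroup G, IsMulCommutative H → H.index = p → H = A := by
    intro H hHc hiH
    haveI := hHc
    haveI := hab
    rcases hmaxl H hiH (H ⊔ A) le_sup_left with h | h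
    · -- A ≤ H, equal cards
      have hAH : A ≤ H := le_sup_right.trans h.le
      exact (Subgroup.eq_of_le_of_card_ge hAH
        (by rw [hcA, hcard_of_index H hiH])).symm
    · exfalso
      apply hmeet H A hiH hiA
      intro x hx
      rw [Subgroup.mem_inf] at hx
      obtain ⟨hxH, hxA⟩ := hx
      refine hcen H A x h ?_ ?_
      · intro y hy
        rw [Subgroup.mem_centralizer_iff]
        rintro z rfl
        exact Subgroup.mul_comm_of_mem_isMulCommutative H hxH hy
      · intro y hy
        rw [Subgroup.mem_centralizer_iff]
        rintro z rfl
        exact Subgroup.mul_comm_of_mem_isMulCommutative A hxA hy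
  -- the target bound
  have harr : p ^ n * p ^ (n - 3) < p ^ (n - 1) * p ^ (n - 1) := by
    rw [← pow_add, ← pow_add]
    exact Nat.pow_lt_pow_right hp1 (by omega)
  -- the key lemma
  have key : ∀ H : Subgroup G,
      cdMeasure G H ≤ cdMeasure G A ∧ (cdMeasure G H = cdMeasure G A → H = A) := by
    intro H
    rw [hmA]
    by_cases hHt : H = ⊤
    · subst hHt
      have hC : Subgroup.centralizer ((⊤ : Subgroup G) : Set G) = Subgroup.center G := by
        rw [Subgroup.coe_top, Subgroup.centralizer_univ]
      have hle : cdMeasure G ⊤ ≤ p ^ n * p ^ (n - 3) := by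
        rw [cdMeasure, hC, Subgroup.card_top, hcard]
        exact Nat.mul_le_mul_left _ hZ
      exact ⟨le_of_lt (lt_of_le_of_lt hle harr), fun h => absurd h (by omega)⟩
    by_cases hCt : Subgroup.centralizer (H : Set G) = ⊤
    · -- H is central
      have hHc : H ≤ Subgroup.center G := by
        intro x hx
        rw [Subgroup.mem_center_iff]
        intro g
        have hg : g ∈ Subgroup.centralizer (H : Set G) := hCt ▸ Subgroup.mem_top g
        exact (Subgroup.mem_centralizer_iff.mp hg x hx).symm
      have h1 : Nat.card H ≤ p ^ (n - 3) := le_trans (Subgroup.card_le_of_le hHc) hZ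
      have hle : cdMeasure G H ≤ p ^ (n - 3) * p ^ n := by
        rw [cdMeasure, hCt, Subgroup.card_top, hcard]
        exact Nat.mul_le_mul_right _ h1
      have harr' : p ^ (n - 3) * p ^ n < p ^ (n - 1) * p ^ (n - 1) := by
        rw [Nat.mul_comm]; exact harr
      exact ⟨le_of_lt (lt_of_le_of_lt hle harr'), fun h => absurd h (by omega)⟩
    · have haH : Nat.card H ≤ p ^ (n - 1) := hlt H hHt
      have haC : Nat.card (Subgroup.centralizer (H : Set G)) ≤ p ^ (n - 1) := hlt _ hCt
      have hle : cdMeasure G H ≤ p ^ (n - 1) * p ^ (n - 1) :=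
        Nat.mul_le_mul haH haC
      refine ⟨hle, fun heq => ?_⟩
      rw [cdMeasure] at heq
      have hpn1 : 0 < p ^ (n - 1) := Nat.pow_pos (by omega : 0 < p)
      have hH1 : Nat.card H = p ^ (n - 1) := by
        have h2 : p ^ (n - 1) * p ^ (n - 1) ≤ Nat.card H * p ^ (n - 1) := by
          rw [← heq]; exact Nat.mul_le_mul_left _ haC
        have := Nat.le_of_mul_le_mul_right h2 hpn1
        omega
      have hC1 : Nat.card (Subgroup.centralizer (H : Set G)) = p ^ (n - 1) := by
        rw [hH1] at heq
        exact Nat.eq_of_mul_eq_mul_left hpn1 heq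
      have hiH : H.index = p := hindex_of_card H hH1
      have hiC : (Subgroup.centralizer (H : Set G)).index = p := hindex_of_card _ hC1
      rcases hmaxl H hiH (H ⊔ Subgroup.centralizer (H : Set G)) le_sup_left with h | h
      · -- centralizer H ≤ H, so centralizer H = H and H is commutative
        have hCH : Subgroup.centralizer (H : Set G) ≤ H := le_sup_right.trans h.le
        have hCeq : Subgroup.centralizer (H : Set G) = H :=
          Subgroup.eq_of_le_of_card_ge hCH (by rw [hH1, hC1])
        have hHcomm : IsMulCommutative H :=
          Subgroup.le_centralizer_iff_isMulCommutative.mp (le_of_eq hCeq.symm)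
        exact huniq H hHcomm hiH
      · exfalso
        apply hmeet H (Subgroup.centralizer (H : Set G)) hiH hiC
        intro x hx
        rw [Subgroup.mem_inf] at hx
        obtain ⟨hxH, hxC⟩ := hx
        refine hcen H (Subgroup.centralizer (H : Set G)) x h ?_ ?_
        · intro y hy
          rw [Subgroup.mem_centralizer_iff]
          rintro z rfl
          exact (Subgroup.mem_centralizer_iff.mp hxC y hy).symm
        · intro y hy
          rw [Subgroup.mem_centralizer_iff]
          rintro z rfl
          exact Subgroup.mem_centralizer_iff.mp hy z hxH
  ext H
  simp only [CD, Set.mem_setOf_eq, Set.mem_singleton_iff]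
  constructor
  · intro h
    exact (key H).2 (le_antisymm (key H).1 (h A))
  · rintro rfl
    intro K
    exact (key K).1
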